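/- Let n ≥ 1. For every smooth function f : ℝ^n × ℝ^n × ℝ^n → ℂ, the pairs (D_s, X_s) and (D_t, X_t) each generate, together with 𝔼 + n, a realisation of sl(2): D_s(X_s f) − X_s(D_s f) = −i (𝔼 f + n f), 𝔼(D_s f) − D_s(𝔼 f) = −D_s f, 𝔼(X_s f) − X_s(𝔼 f) = X_s f; and likewise D_t(X_t f) − X_t(D_t f) = −i (𝔼 f + n f), 𝔼(D_t f) − D_t(𝔼 f) = −D_t f, 𝔼(X_t f) − X_t(𝔼 f) = X_t f. -/

import Mathlib

open Complex Finset Matrix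

noncomputable section

/-- A point of `ℝ^n × ℝ^n × ℝ^n`, with coordinates `(x, y, q)`. -/
abbrev Vec (n : ℕ) := (Fin n → ℝ) × (Fin n → ℝ) × (Fin n → ℝ)

/-- Partial derivative in the variable `x_j`. -/
noncomputable def pdx (n : ℕ) (j : Fin n) (f : Vec n → ℂ) : Vec n → ℂ :=
  fun p => deriv (fun t => f (Function.update p.1 j t, p.2.1, p.2.2)) (p.1 j)

/-- Partial derivative in the variable `y_j`. -/
noncomputable def pdy (n : ℕ) (j : Fin n) (f : Vec n → ℂ) : Vec n → ℂ :=
  fun p => deriv (fun t => f (p.1, Function.update p.2.1 j t, p.2.2)) (p.2.1 j)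

/-- Partial derivative in the variable `q_j`. -/
noncomputable def pdq (n : ℕ) (j : Fin n) (f : Vec n → ℂ) : Vec n → ℂ :=
  fun p => deriv (fun t => f (p.1, p.2.1, Function.update p.2.2 j t)) (p.2.2 j)

/-- The symplectic Dirac operator `D_s f = Σ_j (i q_j ∂f/∂y_j − ∂²f/∂q_j∂x_j)`. -/
noncomputable def Ds (n : ℕ) (f : Vec n → ℂ) : Vec n → ℂ :=
  fun p => ∑ j : Fin n, (Complex.I * (p.2.2 j : ℂ) * pdy n j f p - pdq n j (pdx n j f) p)

/-- The twisted symplectic Dirac operator `D_t f = Σ_j (i q_j ∂f/∂x_j + ∂²f/∂y_j∂q_j)`. -/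
noncomputable def Dt (n : ℕ) (f : Vec n → ℂ) : Vec n → ℂ :=
  fun p => ∑ j : Fin n, (Complex.I * (p.2.2 j : ℂ) * pdx n j f p + pdy n j (pdq n j f) p)

/-- The Fischer dual `X_s f = Σ_j (y_j ∂f/∂q_j + i q_j x_j f)`. -/
noncomputable def Xs (n : ℕ) (f : Vec n → ℂ) : Vec n → ℂ :=
  fun p => ∑ j : Fin n, ((p.2.1 j : ℂ) * pdq n j f p + Complex.I * (p.2.2 j : ℂ) * (p.1 j : ℂ) * f p)

/-- The Fischer dual `X_t f = Σ_j (x_j ∂f/∂q_j − i y_j q_j f)`. -/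
noncomputable def Xt (n : ℕ) (f : Vec n → ℂ) : Vec n → ℂ :=
  fun p => ∑ j : Fin n, ((p.1 j : ℂ) * pdq n j f p - Complex.I * (p.2.1 j : ℂ) * (p.2.2 j : ℂ) * f p)

/-- The Euler operator `𝔼 f = Σ_j (x_j ∂f/∂x_j + y_j ∂f/∂y_j)`. -/
noncomputable def EulerOp (n : ℕ) (f : Vec n → ℂ) : Vec n → ℂ :=
  fun p => ∑ j : Fin n, ((p.1 j : ℂ) * pdx n j f p + (p.2.1 j : ℂ) * pdy n j f p)

/-- The Laplacian in the `(x,y)` variables. -/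
noncomputable def Lap (n : ℕ) (f : Vec n → ℂ) : Vec n → ℂ :=
  fun p => ∑ j : Fin n, (pdx n j (pdx n j f) p + pdy n j (pdy n j f) p)

section Aux

variable {n : ℕ}

/-- directional derivative -/
noncomputable def dd (v : Vec n) (f : Vec n → ℂ) : Vec n → ℂ := fun p => fderiv ℝ f p v

def eX (j : Fin n) : Vec n := (Pi.single j 1, 0, 0)
def eY (j : Fin n) : Vec n := (0, Pi.single j 1, 0)
def eQ (j : Fin n) : Vec n := (0, 0, Pi.single j 1)

@[fun_prop]
theorem ofReal_diffAt {x : ℝ} : DifferentiableAt ℝ Complex.ofReal x :=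
  Complex.ofRealCLM.differentiableAt
@[fun_prop]
theorem ofReal_diff : Differentiable ℝ Complex.ofReal := Complex.ofRealCLM.differentiable
@[fun_prop]
theorem ofReal_contDiff : ContDiff ℝ (⊤:ℕ∞) Complex.ofReal := Complex.ofRealCLM.contDiff

@[fun_prop]
theorem dd_contDiff {f : Vec n → ℂ} (hf : ContDiff ℝ (⊤:ℕ∞) f) (v : Vec n) :
    ContDiff ℝ (⊤:ℕ∞) (dd v f) :=
  (hf.fderiv_right (by simp)).clm_apply contDiff_const

@[fun_prop]
theorem dd_diff {f : Vec n → ℂ} (hf : ContDiff ℝ (⊤:ℕ∞) f) (v : Vec n) :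
    Differentiable ℝ (dd v f) := (dd_contDiff hf v).differentiable (by simp)

@[fun_prop]
theorem dd_diffAt {f : Vec n → ℂ} (hf : ContDiff ℝ (⊤:ℕ∞) f) (v : Vec n) (p : Vec n) :
    DifferentiableAt ℝ (dd v f) p := dd_diff hf v p

theorem dd_comm {f : Vec n → ℂ} (hf : ContDiff ℝ (⊤:ℕ∞) f) (u v : Vec n) (p : Vec n) :
    dd u (dd v f) p = dd v (dd u f) p := by
  have hdf : Differentiable ℝ f := hf.differentiable (by simp)
  have h1 : ∀ y, HasFDerivAt f (fderiv ℝ f y) y := fun y => (hdf y).hasFDerivAt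
  have hcd : ContDiff ℝ (⊤:ℕ∞) (fderiv ℝ f) := hf.fderiv_right (by simp)
  have h2 : HasFDerivAt (fderiv ℝ f) (fderiv ℝ (fderiv ℝ f) p) p :=
    ((hcd.differentiable (by simp)) p).hasFDerivAt
  have hsymm := second_derivative_symmetric h1 h2 u v
  have key : ∀ w z : Vec n, dd w (dd z f) p = fderiv ℝ (fderiv ℝ f) p w z := by
    intro w z
    have hz : dd z f = fun q => (ContinuousLinearMap.apply ℝ ℂ z) (fderiv ℝ f q) := rfl
    rw [dd, hz, show (fun q => (ContinuousLinearMap.apply ℝ ℂ z) (fderiv ℝ f q))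
        = (ContinuousLinearMap.apply ℝ ℂ z) ∘ fderiv ℝ f from rfl,
      ((ContinuousLinearMap.apply ℝ ℂ z).hasFDerivAt.comp p h2).fderiv]
    rfl
  rw [key, key, hsymm]

@[fun_prop]
theorem contDiff_sum' {F : Fin n → Vec n → ℂ} (h : ∀ k, ContDiff ℝ (⊤:ℕ∞) (F k)) :
    ContDiff ℝ (⊤:ℕ∞) (fun p => ∑ k, F k p) := ContDiff.sum fun k _ => h k

@[fun_prop]
theorem diff_sum' {F : Fin n → Vec n → ℂ} (h : ∀ k, Differentiable ℝ (F k)) :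
    Differentiable ℝ (fun p => ∑ k, F k p) := fun p => DifferentiableAt.fun_sum fun k _ => h k p

theorem dd_sum' {F : Fin n → Vec n → ℂ} (h : ∀ k, Differentiable ℝ (F k)) (v : Vec n) :
    dd v (fun p => ∑ k, F k p) = fun p => ∑ k, dd v (F k) p := by
  funext p
  rw [dd, fderiv_fun_sum (fun i _ => (h i) p)]
  simp [ContinuousLinearMap.sum_apply, dd]

theorem dd_mul' {a b : Vec n → ℂ} (ha : Differentiable ℝ a) (hb : Differentiable ℝ b)
    (v : Vec n) :
    dd v (fun p => a p * b p) = fun p => dd v a p * b p + a p * dd v b p := by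
  funext p
  rw [dd, fderiv_fun_mul (ha p) (hb p)]
  simp only [ContinuousLinearMap.add_apply, ContinuousLinearMap.smul_apply, smul_eq_mul, dd]
  ring

theorem dd_add' {a b : Vec n → ℂ} (ha : Differentiable ℝ a) (hb : Differentiable ℝ b)
    (v : Vec n) :
    dd v (fun p => a p + b p) = fun p => dd v a p + dd v b p := by
  funext p
  rw [dd, fderiv_fun_add (ha p) (hb p)]; rfl

theorem dd_sub' {a b : Vec n → ℂ} (ha : Differentiable ℝ a) (hb : Differentiable ℝ b)
    (v : Vec n) :
    dd v (fun p => a p - b p) = fun p => dd v a p - dd v b p := by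
  funext p
  rw [dd, fderiv_fun_sub (ha p) (hb p)]; rfl

theorem dd_const' (c : ℂ) (v : Vec n) : dd (n := n) v (fun _ => c) = fun _ => 0 := by
  funext p; rw [dd, fderiv_fun_const]; rfl

theorem dd_cx' (k : Fin n) (v : Vec n) :
    dd v (fun p : Vec n => ((p.1 k : ℝ) : ℂ)) = fun _ => ((v.1 k : ℝ) : ℂ) := by
  funext p
  rw [show (fun p : Vec n => ((p.1 k : ℝ) : ℂ)) = (Complex.ofRealCLM.comp
    ((ContinuousLinearMap.proj k).comp (ContinuousLinearMap.fst ℝ _ _))) from rfl, dd,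
    ContinuousLinearMap.fderiv]
  rfl

theorem dd_cy' (k : Fin n) (v : Vec n) :
    dd v (fun p : Vec n => ((p.2.1 k : ℝ) : ℂ)) = fun _ => ((v.2.1 k : ℝ) : ℂ) := by
  funext p
  rw [show (fun p : Vec n => ((p.2.1 k : ℝ) : ℂ)) = (Complex.ofRealCLM.comp
    ((ContinuousLinearMap.proj k).comp ((ContinuousLinearMap.fst ℝ _ _).comp
      (ContinuousLinearMap.snd ℝ _ _)))) from rfl, dd, ContinuousLinearMap.fderiv]
  rfl

theorem dd_cq' (k : Fin n) (v : Vec n) :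
    dd v (fun p : Vec n => ((p.2.2 k : ℝ) : ℂ)) = fun _ => ((v.2.2 k : ℝ) : ℂ) := by
  funext p
  rw [show (fun p : Vec n => ((p.2.2 k : ℝ) : ℂ)) = (Complex.ofRealCLM.comp
    ((ContinuousLinearMap.proj k).comp ((ContinuousLinearMap.snd ℝ _ _).comp
      (ContinuousLinearMap.snd ℝ _ _)))) from rfl, dd, ContinuousLinearMap.fderiv]
  rfl

@[simp] theorem eX_x (j k : Fin n) : (((eX j).1 k : ℝ) : ℂ) = if k = j then 1 else 0 := by
  rw [eX]; simp [Pi.single_apply]; split <;> simp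
@[simp] theorem eX_y (j k : Fin n) : (((eX j).2.1 k : ℝ) : ℂ) = 0 := by rw [eX]; simp
@[simp] theorem eX_q (j k : Fin n) : (((eX j).2.2 k : ℝ) : ℂ) = 0 := by rw [eX]; simp
@[simp] theorem eY_x (j k : Fin n) : (((eY j).1 k : ℝ) : ℂ) = 0 := by rw [eY]; simp
@[simp] theorem eY_y (j k : Fin n) : (((eY j).2.1 k : ℝ) : ℂ) = if k = j then 1 else 0 := by
  rw [eY]; simp [Pi.single_apply]; split <;> simp
@[simp] theorem eY_q (j k : Fin n) : (((eY j).2.2 k : ℝ) : ℂ) = 0 := by rw [eY]; simp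
@[simp] theorem eQ_x (j k : Fin n) : (((eQ j).1 k : ℝ) : ℂ) = 0 := by rw [eQ]; simp
@[simp] theorem eQ_y (j k : Fin n) : (((eQ j).2.1 k : ℝ) : ℂ) = 0 := by rw [eQ]; simp
@[simp] theorem eQ_q (j k : Fin n) : (((eQ j).2.2 k : ℝ) : ℂ) = if k = j then 1 else 0 := by
  rw [eQ]; simp [Pi.single_apply]; split <;> simp

section slice

variable {f : Vec n → ℂ}

theorem deriv_along (hf : Differentiable ℝ f) (p : Vec n) (v : Vec n) (t0 : ℝ)
    (c : ℝ → Vec n) (hc : c = fun t => p + (t - t0) • v) :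
    deriv (fun t => f (c t)) t0 = dd v f (c t0) := by
  subst hc
  have hcd : HasDerivAt (fun t => p + (t - t0) • v) v t0 := by
    simpa using (((hasDerivAt_id t0).sub_const t0).smul_const v).const_add p
  have := ((hf _).hasFDerivAt.comp_hasDerivAt t0 hcd)
  simpa [dd, Function.comp_def] using this.deriv

theorem pdx_eq (hf : Differentiable ℝ f) (j : Fin n) : pdx n j f = dd (eX j) f := by
  funext p
  have hc : (fun t => ((Function.update p.1 j t, p.2.1, p.2.2) : Vec n))
      = fun t => p + (t - p.1 j) • eX j := by
    funext t
    refine Prod.ext ?_ (Prod.ext ?_ ?_)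
    · funext k
      by_cases h : k = j
      · subst h; simp [eX]
      · simp [eX, Function.update_apply, h, Pi.single_apply]
    · simp [eX]
    · simp [eX]
  have hc' := fun t => congrFun hc t
  rw [pdx]
  simp only [hc']
  rw [deriv_along hf p (eX j) (p.1 j) _ rfl]
  simp

theorem pdy_eq (hf : Differentiable ℝ f) (j : Fin n) : pdy n j f = dd (eY j) f := by
  funext p
  have hc : (fun t => ((p.1, Function.update p.2.1 j t, p.2.2) : Vec n))
      = fun t => p + (t - p.2.1 j) • eY j := by
    funext t
    refine Prod.ext ?_ (Prod.ext ?_ ?_)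
    · simp [eY]
    · funext k
      by_cases h : k = j
      · subst h; simp [eY]
      · simp [eY, Function.update_apply, h, Pi.single_apply]
    · simp [eY]
  have hc' := fun t => congrFun hc t
  rw [pdy]
  simp only [hc']
  rw [deriv_along hf p (eY j) (p.2.1 j) _ rfl]
  simp

theorem pdq_eq (hf : Differentiable ℝ f) (j : Fin n) : pdq n j f = dd (eQ j) f := by
  funext p
  have hc : (fun t => ((p.1, p.2.1, Function.update p.2.2 j t) : Vec n))
      = fun t => p + (t - p.2.2 j) • eQ j := by
    funext t
    refine Prod.ext ?_ (Prod.ext ?_ ?_)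
    · simp [eQ]
    · simp [eQ]
    · funext k
      by_cases h : k = j
      · subst h; simp [eQ]
      · simp [eQ, Function.update_apply, h, Pi.single_apply]
  have hc' := fun t => congrFun hc t
  rw [pdq]
  simp only [hc']
  rw [deriv_along hf p (eQ j) (p.2.2 j) _ rfl]
  simp

end slice

section ops

variable {f : Vec n → ℂ} (hf : ContDiff ℝ (⊤:ℕ∞) f)
include hf

theorem Xs_eq : Xs n f = fun p =>
    ∑ k, (((p.2.1 k : ℝ) : ℂ) * dd (eQ k) f p
      + Complex.I * ((p.2.2 k : ℝ) : ℂ) * ((p.1 k : ℝ) : ℂ) * f p) := by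
  have hd : Differentiable ℝ f := hf.differentiable (by simp)
  unfold Xs
  simp only [pdq_eq hd]

theorem Xt_eq : Xt n f = fun p =>
    ∑ k, (((p.1 k : ℝ) : ℂ) * dd (eQ k) f p
      - Complex.I * ((p.2.1 k : ℝ) : ℂ) * ((p.2.2 k : ℝ) : ℂ) * f p) := by
  have hd : Differentiable ℝ f := hf.differentiable (by simp)
  unfold Xt
  simp only [pdq_eq hd]

theorem E_eq : EulerOp n f = fun p =>
    ∑ k, (((p.1 k : ℝ) : ℂ) * dd (eX k) f p + ((p.2.1 k : ℝ) : ℂ) * dd (eY k) f p) := by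
  have hd : Differentiable ℝ f := hf.differentiable (by simp)
  unfold EulerOp
  simp only [pdx_eq hd, pdy_eq hd]

theorem Ds_eq : Ds n f = fun p =>
    ∑ k, (Complex.I * ((p.2.2 k : ℝ) : ℂ) * dd (eY k) f p - dd (eQ k) (dd (eX k) f) p) := by
  have hd : Differentiable ℝ f := hf.differentiable (by simp)
  have h2 : ∀ j : Fin n, pdq n j (dd (eX j) f) = dd (eQ j) (dd (eX j) f) :=
    fun j => pdq_eq (dd_diff hf _) j
  unfold Ds
  simp only [pdx_eq hd, pdy_eq hd, h2]

theorem Dt_eq : Dt n f = fun p =>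
    ∑ k, (Complex.I * ((p.2.2 k : ℝ) : ℂ) * dd (eX k) f p + dd (eY k) (dd (eQ k) f) p) := by
  have hd : Differentiable ℝ f := hf.differentiable (by simp)
  have h2 : ∀ j : Fin n, pdy n j (dd (eQ j) f) = dd (eY j) (dd (eQ j) f) :=
    fun j => pdy_eq (dd_diff hf _) j
  unfold Dt
  simp only [pdq_eq hd, pdx_eq hd, h2]

@[fun_prop]
theorem contDiff_Xs : ContDiff ℝ (⊤:ℕ∞) (Xs n f) := by rw [Xs_eq hf]; fun_prop

@[fun_prop]
theorem contDiff_Xt : ContDiff ℝ (⊤:ℕ∞) (Xt n f) := by rw [Xt_eq hf]; fun_prop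

@[fun_prop]
theorem contDiff_E : ContDiff ℝ (⊤:ℕ∞) (EulerOp n f) := by rw [E_eq hf]; fun_prop

@[fun_prop]
theorem contDiff_Ds : ContDiff ℝ (⊤:ℕ∞) (Ds n f) := by rw [Ds_eq hf]; fun_prop

@[fun_prop]
theorem contDiff_Dt : ContDiff ℝ (⊤:ℕ∞) (Dt n f) := by rw [Dt_eq hf]; fun_prop

end ops


theorem dd_comm' {f : Vec n → ℂ} (hf : ContDiff ℝ (⊤:ℕ∞) f) (u v : Vec n) :
    dd u (dd v f) = dd v (dd u f) := funext fun p => dd_comm hf u v p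

theorem swap3 {f : Vec n → ℂ} (hf : ContDiff ℝ (⊤:ℕ∞) f) (u v w : Vec n) :
    dd u (dd v (dd w f)) = dd v (dd w (dd u f)) := by
  rw [dd_comm' (dd_contDiff hf w) u v, dd_comm' hf u w]

theorem swap3' {f : Vec n → ℂ} (hf : ContDiff ℝ (⊤:ℕ∞) f) (u v w : Vec n) :
    dd u (dd v (dd w f)) = dd w (dd u (dd v f)) := by
  rw [dd_comm' hf v w, dd_comm' (dd_contDiff hf v) u w]

theorem sum_delta (g : Fin n → ℂ) :
    (∑ k, g k) = ∑ j, ∑ k, if k = j then g k else 0 := by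
  symm
  simp [Finset.sum_ite_eq']

theorem sum_sym {F G : Fin n → Fin n → ℂ} (h : ∀ j k, F j k + F k j = G j k + G k j) :
    (∑ j, ∑ k, F j k) = ∑ j, ∑ k, G j k := by
  have key : ∀ (H : Fin n → Fin n → ℂ),
      (2:ℂ) * (∑ j, ∑ k, H j k) = ∑ j, ∑ k, (H j k + H k j) := by
    intro H
    have h1 : (∑ j, ∑ k, (H j k + H k j)) = (∑ j, ∑ k, H j k) + ∑ j, ∑ k, H k j := by
      simp [Finset.sum_add_distrib]
    have h2 : (∑ j : Fin n, ∑ k : Fin n, H k j) = ∑ j, ∑ k, H j k := Finset.sum_comm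
    rw [h1, h2, two_mul]
  apply mul_left_cancel₀ (two_ne_zero' ℂ)
  rw [key F, key G]
  exact Finset.sum_congr rfl fun j _ => Finset.sum_congr rfl fun k _ => h j k


section swaps
variable {f : Vec n → ℂ} (hf : ContDiff ℝ (⊤:ℕ∞) f)
include hf
theorem swXX0 (a b : Fin n) :
    dd (eX a) (dd (eX b) f) = dd (eX b) (dd (eX a) f) :=
  dd_comm' hf _ _
theorem swXXX (a b : Fin n) (c : Fin n) :
    dd (eX a) (dd (eX b) (dd (eX c) f)) = dd (eX b) (dd (eX a) (dd (eX c) f)) :=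
  dd_comm' (dd_contDiff hf _) _ _
theorem swXXY (a b : Fin n) (c : Fin n) :
    dd (eX a) (dd (eX b) (dd (eY c) f)) = dd (eX b) (dd (eX a) (dd (eY c) f)) :=
  dd_comm' (dd_contDiff hf _) _ _
theorem swXXQ (a b : Fin n) (c : Fin n) :
    dd (eX a) (dd (eX b) (dd (eQ c) f)) = dd (eX b) (dd (eX a) (dd (eQ c) f)) :=
  dd_comm' (dd_contDiff hf _) _ _
theorem swXY0 (a b : Fin n) :
    dd (eX a) (dd (eY b) f) = dd (eY b) (dd (eX a) f) :=
  dd_comm' hf _ _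
theorem swXYX (a b : Fin n) (c : Fin n) :
    dd (eX a) (dd (eY b) (dd (eX c) f)) = dd (eY b) (dd (eX a) (dd (eX c) f)) :=
  dd_comm' (dd_contDiff hf _) _ _
theorem swXYY (a b : Fin n) (c : Fin n) :
    dd (eX a) (dd (eY b) (dd (eY c) f)) = dd (eY b) (dd (eX a) (dd (eY c) f)) :=
  dd_comm' (dd_contDiff hf _) _ _
theorem swXYQ (a b : Fin n) (c : Fin n) :
    dd (eX a) (dd (eY b) (dd (eQ c) f)) = dd (eY b) (dd (eX a) (dd (eQ c) f)) :=
  dd_comm' (dd_contDiff hf _) _ _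
theorem swXQ0 (a b : Fin n) :
    dd (eX a) (dd (eQ b) f) = dd (eQ b) (dd (eX a) f) :=
  dd_comm' hf _ _
theorem swXQX (a b : Fin n) (c : Fin n) :
    dd (eX a) (dd (eQ b) (dd (eX c) f)) = dd (eQ b) (dd (eX a) (dd (eX c) f)) :=
  dd_comm' (dd_contDiff hf _) _ _
theorem swXQY (a b : Fin n) (c : Fin n) :
    dd (eX a) (dd (eQ b) (dd (eY c) f)) = dd (eQ b) (dd (eX a) (dd (eY c) f)) :=
  dd_comm' (dd_contDiff hf _) _ _
theorem swXQQ (a b : Fin n) (c : Fin n) :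
    dd (eX a) (dd (eQ b) (dd (eQ c) f)) = dd (eQ b) (dd (eX a) (dd (eQ c) f)) :=
  dd_comm' (dd_contDiff hf _) _ _
theorem swYY0 (a b : Fin n) :
    dd (eY a) (dd (eY b) f) = dd (eY b) (dd (eY a) f) :=
  dd_comm' hf _ _
theorem swYYX (a b : Fin n) (c : Fin n) :
    dd (eY a) (dd (eY b) (dd (eX c) f)) = dd (eY b) (dd (eY a) (dd (eX c) f)) :=
  dd_comm' (dd_contDiff hf _) _ _
theorem swYYY (a b : Fin n) (c : Fin n) :
    dd (eY a) (dd (eY b) (dd (eY c) f)) = dd (eY b) (dd (eY a) (dd (eY c) f)) :=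
  dd_comm' (dd_contDiff hf _) _ _
theorem swYYQ (a b : Fin n) (c : Fin n) :
    dd (eY a) (dd (eY b) (dd (eQ c) f)) = dd (eY b) (dd (eY a) (dd (eQ c) f)) :=
  dd_comm' (dd_contDiff hf _) _ _
theorem swYQ0 (a b : Fin n) :
    dd (eY a) (dd (eQ b) f) = dd (eQ b) (dd (eY a) f) :=
  dd_comm' hf _ _
theorem swYQX (a b : Fin n) (c : Fin n) :
    dd (eY a) (dd (eQ b) (dd (eX c) f)) = dd (eQ b) (dd (eY a) (dd (eX c) f)) :=
  dd_comm' (dd_contDiff hf _) _ _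
theorem swYQY (a b : Fin n) (c : Fin n) :
    dd (eY a) (dd (eQ b) (dd (eY c) f)) = dd (eQ b) (dd (eY a) (dd (eY c) f)) :=
  dd_comm' (dd_contDiff hf _) _ _
theorem swYQQ (a b : Fin n) (c : Fin n) :
    dd (eY a) (dd (eQ b) (dd (eQ c) f)) = dd (eQ b) (dd (eY a) (dd (eQ c) f)) :=
  dd_comm' (dd_contDiff hf _) _ _
theorem swQQ0 (a b : Fin n) :
    dd (eQ a) (dd (eQ b) f) = dd (eQ b) (dd (eQ a) f) :=
  dd_comm' hf _ _
theorem swQQX (a b : Fin n) (c : Fin n) :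
    dd (eQ a) (dd (eQ b) (dd (eX c) f)) = dd (eQ b) (dd (eQ a) (dd (eX c) f)) :=
  dd_comm' (dd_contDiff hf _) _ _
theorem swQQY (a b : Fin n) (c : Fin n) :
    dd (eQ a) (dd (eQ b) (dd (eY c) f)) = dd (eQ b) (dd (eQ a) (dd (eY c) f)) :=
  dd_comm' (dd_contDiff hf _) _ _
theorem swQQQ (a b : Fin n) (c : Fin n) :
    dd (eQ a) (dd (eQ b) (dd (eQ c) f)) = dd (eQ b) (dd (eQ a) (dd (eQ c) f)) :=
  dd_comm' (dd_contDiff hf _) _ _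

end swaps

end Aux

set_option maxHeartbeats 2000000 in
theorem sl2_realisations_of_symplectic_Dirac_pairs
    (n : ℕ) (hn : 1 ≤ n) (f : Vec n → ℂ) (hf : ContDiff ℝ (⊤ : ℕ∞) f) :
    ((fun p => Ds n (Xs n f) p - Xs n (Ds n f) p)
        = (fun p => -Complex.I * (EulerOp n f p + (n : ℂ) * f p))) ∧
    ((fun p => EulerOp n (Ds n f) p - Ds n (EulerOp n f) p) = (fun p => -(Ds n f p))) ∧
    ((fun p => EulerOp n (Xs n f) p - Xs n (EulerOp n f) p) = (fun p => Xs n f p)) ∧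
    ((fun p => Dt n (Xt n f) p - Xt n (Dt n f) p)
        = (fun p => -Complex.I * (EulerOp n f p + (n : ℂ) * f p))) ∧
    ((fun p => EulerOp n (Dt n f) p - Dt n (EulerOp n f) p) = (fun p => -(Dt n f p))) ∧
    ((fun p => EulerOp n (Xt n f) p - Xt n (EulerOp n f) p) = (fun p => Xt n f p)) := by
  have hd : Differentiable ℝ f := hf.differentiable (by simp)
  have hnf : ∀ p : Vec n, ((n:ℕ):ℂ) * f p = ∑ _k : Fin n, f p := fun p => by
    simp [Finset.sum_const, Finset.card_univ, nsmul_eq_mul]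
  refine ⟨?_, ?_, ?_, ?_, ?_, ?_⟩
  · funext p
    rw [Ds_eq (contDiff_Xs hf), Xs_eq (contDiff_Ds hf)]
    simp only [Xs_eq hf, Ds_eq hf, E_eq hf]
    simp (disch := intros; fun_prop) only [dd_sum', dd_mul', dd_add', dd_sub', dd_const',
      dd_cx', dd_cy', dd_cq', eX_x, eX_y, eX_q, eY_x, eY_y, eY_q, eQ_x, eQ_y, eQ_q]
    simp only [zero_mul, mul_zero, zero_add, add_zero, one_mul, mul_one, ite_mul, sub_zero, zero_sub]
    rw [hnf p]
    simp only [Finset.mul_sum, ← Finset.sum_add_distrib, ← Finset.sum_sub_distrib]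
    conv_rhs => rw [sum_delta]
    refine sum_sym fun j k => ?_
    simp only [swXX0 hf, swXXX hf, swXXY hf, swXXQ hf, swXY0 hf, swXYX hf, swXYY hf, swXYQ hf, swXQ0 hf, swXQX hf, swXQY hf, swXQQ hf, swYY0 hf, swYYX hf, swYYY hf, swYYQ hf, swYQ0 hf, swYQX hf, swYQY hf, swYQQ hf, swQQ0 hf, swQQX hf, swQQY hf, swQQQ hf]
    by_cases h : k = j
    · subst h
      simp only [if_pos rfl, eq_self_iff_true, if_true]
      ring
    · simp only [if_neg h, if_neg (Ne.symm h), mul_zero, zero_mul, add_zero, zero_add]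
      ring
  · funext p
    rw [E_eq (contDiff_Ds hf), Ds_eq (contDiff_E hf)]
    simp only [Ds_eq hf, E_eq hf]
    simp (disch := intros; fun_prop) only [dd_sum', dd_mul', dd_add', dd_sub', dd_const',
      dd_cx', dd_cy', dd_cq', eX_x, eX_y, eX_q, eY_x, eY_y, eY_q, eQ_x, eQ_y, eQ_q]
    simp only [zero_mul, mul_zero, zero_add, add_zero, one_mul, mul_one, ite_mul, sub_zero, zero_sub]
    simp only [Finset.mul_sum, ← Finset.sum_add_distrib, ← Finset.sum_sub_distrib]
    conv_rhs => rw [← Finset.sum_neg_distrib, sum_delta]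
    refine sum_sym fun j k => ?_
    simp only [swXX0 hf, swXXX hf, swXXY hf, swXXQ hf, swXY0 hf, swXYX hf, swXYY hf, swXYQ hf, swXQ0 hf, swXQX hf, swXQY hf, swXQQ hf, swYY0 hf, swYYX hf, swYYY hf, swYYQ hf, swYQ0 hf, swYQX hf, swYQY hf, swYQQ hf, swQQ0 hf, swQQX hf, swQQY hf, swQQQ hf]
    by_cases h : k = j
    · subst h
      simp only [if_pos rfl, eq_self_iff_true, if_true]
      ring
    · simp only [if_neg h, if_neg (Ne.symm h), mul_zero, zero_mul, add_zero, zero_add]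
      ring
  · funext p
    rw [E_eq (contDiff_Xs hf), Xs_eq (contDiff_E hf)]
    simp only [Xs_eq hf, E_eq hf]
    simp (disch := intros; fun_prop) only [dd_sum', dd_mul', dd_add', dd_sub', dd_const',
      dd_cx', dd_cy', dd_cq', eX_x, eX_y, eX_q, eY_x, eY_y, eY_q, eQ_x, eQ_y, eQ_q]
    simp only [zero_mul, mul_zero, zero_add, add_zero, one_mul, mul_one, ite_mul, sub_zero, zero_sub]
    simp only [Finset.mul_sum, ← Finset.sum_add_distrib, ← Finset.sum_sub_distrib]
    conv_rhs => rw [sum_delta]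
    refine sum_sym fun j k => ?_
    simp only [swXX0 hf, swXXX hf, swXXY hf, swXXQ hf, swXY0 hf, swXYX hf, swXYY hf, swXYQ hf, swXQ0 hf, swXQX hf, swXQY hf, swXQQ hf, swYY0 hf, swYYX hf, swYYY hf, swYYQ hf, swYQ0 hf, swYQX hf, swYQY hf, swYQQ hf, swQQ0 hf, swQQX hf, swQQY hf, swQQQ hf]
    by_cases h : k = j
    · subst h
      simp only [if_pos rfl, eq_self_iff_true, if_true]
      ring
    · simp only [if_neg h, if_neg (Ne.symm h), mul_zero, zero_mul, add_zero, zero_add]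
      ring
  · funext p
    rw [Dt_eq (contDiff_Xt hf), Xt_eq (contDiff_Dt hf)]
    simp only [Xt_eq hf, Dt_eq hf, E_eq hf]
    simp (disch := intros; fun_prop) only [dd_sum', dd_mul', dd_add', dd_sub', dd_const',
      dd_cx', dd_cy', dd_cq', eX_x, eX_y, eX_q, eY_x, eY_y, eY_q, eQ_x, eQ_y, eQ_q]
    simp only [zero_mul, mul_zero, zero_add, add_zero, one_mul, mul_one, ite_mul, sub_zero, zero_sub]
    rw [hnf p]
    simp only [Finset.mul_sum, ← Finset.sum_add_distrib, ← Finset.sum_sub_distrib]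
    conv_rhs => rw [sum_delta]
    refine sum_sym fun j k => ?_
    simp only [swXX0 hf, swXXX hf, swXXY hf, swXXQ hf, swXY0 hf, swXYX hf, swXYY hf, swXYQ hf, swXQ0 hf, swXQX hf, swXQY hf, swXQQ hf, swYY0 hf, swYYX hf, swYYY hf, swYYQ hf, swYQ0 hf, swYQX hf, swYQY hf, swYQQ hf, swQQ0 hf, swQQX hf, swQQY hf, swQQQ hf]
    by_cases h : k = j
    · subst h
      simp only [if_pos rfl, eq_self_iff_true, if_true]
      ring
    · simp only [if_neg h, if_neg (Ne.symm h), mul_zero, zero_mul, add_zero, zero_add]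
      ring
  · funext p
    rw [E_eq (contDiff_Dt hf), Dt_eq (contDiff_E hf)]
    simp only [Dt_eq hf, E_eq hf]
    simp (disch := intros; fun_prop) only [dd_sum', dd_mul', dd_add', dd_sub', dd_const',
      dd_cx', dd_cy', dd_cq', eX_x, eX_y, eX_q, eY_x, eY_y, eY_q, eQ_x, eQ_y, eQ_q]
    simp only [zero_mul, mul_zero, zero_add, add_zero, one_mul, mul_one, ite_mul, sub_zero, zero_sub]
    simp only [Finset.mul_sum, ← Finset.sum_add_distrib, ← Finset.sum_sub_distrib]
    conv_rhs => rw [← Finset.sum_neg_distrib, sum_delta]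
    refine sum_sym fun j k => ?_
    simp only [swXX0 hf, swXXX hf, swXXY hf, swXXQ hf, swXY0 hf, swXYX hf, swXYY hf, swXYQ hf, swXQ0 hf, swXQX hf, swXQY hf, swXQQ hf, swYY0 hf, swYYX hf, swYYY hf, swYYQ hf, swYQ0 hf, swYQX hf, swYQY hf, swYQQ hf, swQQ0 hf, swQQX hf, swQQY hf, swQQQ hf]
    by_cases h : k = j
    · subst h
      simp only [if_pos rfl, eq_self_iff_true, if_true]
      ring
    · simp only [if_neg h, if_neg (Ne.symm h), mul_zero, zero_mul, add_zero, zero_add]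
      ring
  · funext p
    rw [E_eq (contDiff_Xt hf), Xt_eq (contDiff_E hf)]
    simp only [Xt_eq hf, E_eq hf]
    simp (disch := intros; fun_prop) only [dd_sum', dd_mul', dd_add', dd_sub', dd_const',
      dd_cx', dd_cy', dd_cq', eX_x, eX_y, eX_q, eY_x, eY_y, eY_q, eQ_x, eQ_y, eQ_q]
    simp only [zero_mul, mul_zero, zero_add, add_zero, one_mul, mul_one, ite_mul, sub_zero, zero_sub]
    simp only [Finset.mul_sum, ← Finset.sum_add_distrib, ← Finset.sum_sub_distrib]
    conv_rhs => rw [sum_delta]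
    refine sum_sym fun j k => ?_
    simp only [swXX0 hf, swXXX hf, swXXY hf, swXXQ hf, swXY0 hf, swXYX hf, swXYY hf, swXYQ hf, swXQ0 hf, swXQX hf, swXQY hf, swXQQ hf, swYY0 hf, swYYX hf, swYYY hf, swYYQ hf, swYQ0 hf, swYQX hf, swYQY hf, swYQQ hf, swQQ0 hf, swQQX hf, swQQY hf, swQQQ hf]
    by_cases h : k = j
    · subst h
      simp only [if_pos rfl, eq_self_iff_true, if_true]
      ring
    · simp only [if_neg h, if_neg (Ne.symm h), mul_zero, zero_mul, add_zero, zero_add]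
      ring
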